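/- Let S be a finite set; for each x ∈ S let n_x be a positive integer, let a_x ∈ K satisfy ‖q^{n_x}·a_x‖ ≤ 1, and let α_x ∈ K be a root of unity. For ε ∈ K set G(ε) = ∏_{x∈S} (−1 + a_x·α_x·q^{n_x}·ε^{n_x} − α_x²·ε^{2·n_x}). Then ‖G(ε)‖ ≤ 1 for every root of unity ε ∈ K, and ‖G(ε)‖ = 1 for all but finitely many roots of unity ε ∈ K of order coprime to p. Equivalently, the minimum of v_q(G(ε)) over all roots of unity ε ∈ K equals 0. -/

import Mathlib

/-- The additive valuation on the algebraic closure of `ℚ_[p]` attached to an absolute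
value `v`, normalised so that `q = p ^ d` has valuation `1`. -/
noncomputable def vq (p d : ℕ) [Fact p.Prime] (v : AlgebraicClosure ℚ_[p] → ℝ)
    (x : AlgebraicClosure ℚ_[p]) : ℝ :=
  -Real.log (v x) / Real.log ((p : ℝ) ^ d)

/-- `ε` is a root of unity. -/
def IsRootOfUnity {K : Type*} [Monoid K] (ε : K) : Prop :=
  ∃ m : ℕ, 0 < m ∧ ε ^ m = 1

/-- `ε` is a root of unity of order coprime to `p`. -/
def IsPrimeToRootOfUnity (p : ℕ) {K : Type*} [Monoid K] (ε : K) : Prop :=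
  ∃ m : ℕ, 0 < m ∧ ¬ p ∣ m ∧ ε ^ m = 1

/-- The product `G(ε) = ∏_{x ∈ S} (−1 + a_x·α_x·q^{n_x}·ε^{n_x} − α_x²·ε^{2·n_x})`,
where `q = p ^ d`. -/
noncomputable def Gprod (p d : ℕ) [Fact p.Prime] {ι : Type*} (S : Finset ι) (n : ι → ℕ)
    (a α : ι → AlgebraicClosure ℚ_[p]) (ε : AlgebraicClosure ℚ_[p]) :
    AlgebraicClosure ℚ_[p] :=
  ∏ x ∈ S, (-1 + a x * α x * ((p : AlgebraicClosure ℚ_[p]) ^ d) ^ n x * ε ^ n x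
    - α x ^ 2 * ε ^ (2 * n x))

set_option linter.unusedSectionVars false


open Polynomial

section Aux

variable {p : ℕ} [Fact p.Prime] {v : AlgebraicClosure ℚ_[p] → ℝ}

local notation "K" => AlgebraicClosure ℚ_[p]

lemma v_one (hext : ∀ x : ℚ_[p], v (algebraMap ℚ_[p] K x) = ‖x‖) : v 1 = 1 := by
  simpa using hext 1

lemma v_zero (hext : ∀ x : ℚ_[p], v (algebraMap ℚ_[p] K x) = ‖x‖) : v 0 = 0 := by
  simpa using hext 0

lemma v_pow (hmul : ∀ x y, v (x * y) = v x * v y)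
    (hext : ∀ x : ℚ_[p], v (algebraMap ℚ_[p] K x) = ‖x‖) (x : K) (k : ℕ) :
    v (x ^ k) = v x ^ k := by
  induction k with
  | zero => simpa using v_one hext
  | succ k ih => rw [pow_succ, hmul, ih, pow_succ]

lemma v_nonneg (hmul : ∀ x y, v (x * y) = v x * v y) (x : K) : 0 ≤ v x := by
  obtain ⟨y, hy⟩ := IsAlgClosed.exists_pow_nat_eq x (n := 2) (by norm_num)
  rw [← hy, sq, hmul]
  exact mul_self_nonneg _

lemma v_pos (hmul : ∀ x y, v (x * y) = v x * v y)
    (hext : ∀ x : ℚ_[p], v (algebraMap ℚ_[p] K x) = ‖x‖) {x : K} (hx : x ≠ 0) :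
    0 < v x := by
  have h1 : v x * v x⁻¹ = 1 := by rw [← hmul, mul_inv_cancel₀ hx]; exact v_one hext
  refine lt_of_le_of_ne (v_nonneg hmul x) fun h => ?_
  rw [← h, zero_mul] at h1
  norm_num at h1

lemma v_rou (hmul : ∀ x y, v (x * y) = v x * v y)
    (hext : ∀ x : ℚ_[p], v (algebraMap ℚ_[p] K x) = ‖x‖) {ε : K}
    (hε : IsRootOfUnity ε) : v ε = 1 := by
  obtain ⟨m, hm, he⟩ := hε
  have h1 : v ε ^ m = 1 := by rw [← v_pow hmul hext, he, v_one hext]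
  have h0 : 0 ≤ v ε := v_nonneg hmul ε
  rcases lt_trichotomy (v ε) 1 with h | h | h
  · exact absurd h1 (pow_lt_one₀ h0 h hm.ne').ne
  · exact h
  · exact absurd h1 (one_lt_pow₀ h hm.ne').ne'

lemma v_neg (hmul : ∀ x y, v (x * y) = v x * v y)
    (hext : ∀ x : ℚ_[p], v (algebraMap ℚ_[p] K x) = ‖x‖) (x : K) : v (-x) = v x := by
  have h1 : v (-1 : K) = 1 := v_rou hmul hext ⟨2, two_pos, by norm_num⟩
  calc v (-x) = v (-1 * x) := by rw [neg_one_mul]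
  _ = v x := by rw [hmul, h1, one_mul]

lemma v_sub_le (hmul : ∀ x y, v (x * y) = v x * v y)
    (hna : ∀ x y, v (x + y) ≤ max (v x) (v y))
    (hext : ∀ x : ℚ_[p], v (algebraMap ℚ_[p] K x) = ‖x‖) (x y : K) :
    v (x - y) ≤ max (v x) (v y) := by
  rw [sub_eq_add_neg]
  simpa [v_neg hmul hext] using hna x (-y)

lemma v_sum_le (hna : ∀ x y, v (x + y) ≤ max (v x) (v y))
    (hext : ∀ x : ℚ_[p], v (algebraMap ℚ_[p] K x) = ‖x‖)
    {ι : Type*} (s : Finset ι) (f : ι → K) {C : ℝ} (hC : 0 ≤ C)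
    (h : ∀ i ∈ s, v (f i) ≤ C) : v (∑ i ∈ s, f i) ≤ C := by
  classical
  induction s using Finset.cons_induction with
  | empty => simpa [v_zero hext] using hC
  | cons a s ha ih =>
    rw [Finset.sum_cons]
    exact (hna _ _).trans (max_le (h a (by simp)) (ih fun i hi => h i (by simp [hi])))

lemma v_prod (hmul : ∀ x y, v (x * y) = v x * v y)
    (hext : ∀ x : ℚ_[p], v (algebraMap ℚ_[p] K x) = ‖x‖)
    {ι : Type*} (s : Finset ι) (f : ι → K) :
    v (∏ i ∈ s, f i) = ∏ i ∈ s, v (f i) := by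
  classical
  induction s using Finset.cons_induction with
  | empty => simpa using v_one hext
  | cons a s ha ih => rw [Finset.prod_cons, hmul, ih, Finset.prod_cons]

lemma v_natCast_le (hext : ∀ x : ℚ_[p], v (algebraMap ℚ_[p] K x) = ‖x‖) (k : ℕ) :
    v (k : K) ≤ 1 := by
  have h : algebraMap ℚ_[p] K (k : ℚ_[p]) = (k : K) := map_natCast _ k
  rw [← h, hext]
  have := Padic.norm_int_le_one (p := p) (k : ℤ)
  simpa using this

lemma v_natCast_eq_one (hext : ∀ x : ℚ_[p], v (algebraMap ℚ_[p] K x) = ‖x‖)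
    {m : ℕ} (hpm : ¬ p ∣ m) : v (m : K) = 1 := by
  have h : algebraMap ℚ_[p] K (m : ℚ_[p]) = (m : K) := map_natCast _ m
  rw [← h, hext]
  have h1 := Padic.norm_int_le_one (p := p) (m : ℤ)
  have h2 : ¬ ‖((m : ℤ) : ℚ_[p])‖ < 1 := by
    rw [Padic.norm_intCast_lt_one_iff]
    exact_mod_cast hpm
  push_cast at h1 h2 ⊢
  linarith [lt_or_eq_of_le h1]

end Aux
section Aux2

variable {p : ℕ} [Fact p.Prime] {v : AlgebraicClosure ℚ_[p] → ℝ}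

local notation "K" => AlgebraicClosure ℚ_[p]

lemma IsPrimeToRootOfUnity.isRootOfUnity {M : Type*} [Monoid M] {ε : M}
    (h : IsPrimeToRootOfUnity p ε) : IsRootOfUnity ε := by
  obtain ⟨m, hm, _, he⟩ := h; exact ⟨m, hm, he⟩

lemma IsPrimeToRootOfUnity.pow {M : Type*} [Monoid M] {ε : M}
    (h : IsPrimeToRootOfUnity p ε) (k : ℕ) : IsPrimeToRootOfUnity p (ε ^ k) := by
  obtain ⟨m, hm, hp, he⟩ := h
  exact ⟨m, hm, hp, by rw [← pow_mul, mul_comm, pow_mul, he, one_pow]⟩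

lemma IsPrimeToRootOfUnity.mul {M : Type*} [CommMonoid M] {ε₁ ε₂ : M}
    (h₁ : IsPrimeToRootOfUnity p ε₁) (h₂ : IsPrimeToRootOfUnity p ε₂) :
    IsPrimeToRootOfUnity p (ε₁ * ε₂) := by
  obtain ⟨m₁, hm₁, hp₁, he₁⟩ := h₁
  obtain ⟨m₂, hm₂, hp₂, he₂⟩ := h₂
  refine ⟨m₁ * m₂, Nat.mul_pos hm₁ hm₂, ?_, ?_⟩
  · intro hdvd
    rcases (Nat.Prime.dvd_mul (Fact.out)).mp hdvd with h | h
    exacts [hp₁ h, hp₂ h]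
  · rw [mul_pow, pow_mul, he₁, one_pow, one_mul, mul_comm m₁ m₂, pow_mul, he₂, one_pow]

/-- Key lemma: a nontrivial prime-to-`p` root of unity is at distance 1 from 1. -/
lemma v_rou_sub_one (hmul : ∀ x y, v (x * y) = v x * v y)
    (hna : ∀ x y, v (x + y) ≤ max (v x) (v y))
    (hext : ∀ x : ℚ_[p], v (algebraMap ℚ_[p] K x) = ‖x‖)
    {ζ : K} (hζ : IsPrimeToRootOfUnity p ζ) (h1 : ζ ≠ 1) : v (ζ - 1) = 1 := by
  obtain ⟨m, hm, hpm, he⟩ := hζ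
  have hvζ : v ζ = 1 := v_rou hmul hext ⟨m, hm, he⟩
  have hgeom : ∑ i ∈ Finset.range m, ζ ^ i = 0 := by
    have h := geom_sum_mul ζ m
    rw [he, sub_self] at h
    exact (mul_eq_zero.mp h).resolve_right (sub_ne_zero.mpr h1)
  have hsum : ((m : K)) = ∑ i ∈ Finset.range m, (1 - ζ ^ i) := by
    rw [Finset.sum_sub_distrib, hgeom, sub_zero, Finset.sum_const, Finset.card_range,
      nsmul_eq_mul, mul_one]
  have hC : 0 ≤ v (ζ - 1) := v_nonneg hmul _
  have hterm : ∀ i ∈ Finset.range m, v (1 - ζ ^ i) ≤ v (ζ - 1) := by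
    intro i _
    have hfac : 1 - ζ ^ i = -((∑ j ∈ Finset.range i, ζ ^ j) * (ζ - 1)) := by
      rw [geom_sum_mul]; ring
    rw [hfac, v_neg hmul hext, hmul]
    have hs : v (∑ j ∈ Finset.range i, ζ ^ j) ≤ 1 := by
      refine v_sum_le hna hext _ _ zero_le_one fun j _ => ?_
      rw [v_pow hmul hext, hvζ, one_pow]
    calc v (∑ j ∈ Finset.range i, ζ ^ j) * v (ζ - 1) ≤ 1 * v (ζ - 1) :=
      mul_le_mul_of_nonneg_right hs hC
    _ = v (ζ - 1) := one_mul _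
  have hle : v (m : K) ≤ v (ζ - 1) := by
    rw [hsum]; exact v_sum_le hna hext _ _ hC hterm
  have hm1 : v (m : K) = 1 := v_natCast_eq_one hext hpm
  have hub : v (ζ - 1) ≤ 1 := by
    have := v_sub_le hmul hna hext ζ 1
    rwa [hvζ, v_one hext, max_self] at this
  linarith

lemma v_rou_sub (hmul : ∀ x y, v (x * y) = v x * v y)
    (hna : ∀ x y, v (x + y) ≤ max (v x) (v y))
    (hext : ∀ x : ℚ_[p], v (algebraMap ℚ_[p] K x) = ‖x‖)
    {ζ₁ ζ₂ : K} (h₁ : IsPrimeToRootOfUnity p ζ₁) (h₂ : IsPrimeToRootOfUnity p ζ₂)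
    (hne : ζ₁ ≠ ζ₂) : v (ζ₁ - ζ₂) = 1 := by
  obtain ⟨m₂, hm₂, hpm₂, he₂⟩ := h₂
  set ζ : K := ζ₁ * ζ₂ ^ (m₂ - 1) with hζdef
  have hζ₂ζ : ζ₂ * ζ = ζ₁ := by
    rw [hζdef, mul_comm ζ₂, mul_assoc, ← pow_succ, Nat.sub_add_cancel hm₂, he₂, mul_one]
  have hζ : IsPrimeToRootOfUnity p ζ :=
    IsPrimeToRootOfUnity.mul h₁ (IsPrimeToRootOfUnity.pow ⟨m₂, hm₂, hpm₂, he₂⟩ _)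
  have hζ1 : ζ ≠ 1 := by
    intro h
    rw [h, mul_one] at hζ₂ζ
    exact hne hζ₂ζ.symm
  have : ζ₁ - ζ₂ = ζ₂ * (ζ - 1) := by rw [mul_sub, hζ₂ζ, mul_one]
  rw [this, hmul, v_rou hmul hext ⟨m₂, hm₂, he₂⟩, one_mul]
  exact v_rou_sub_one hmul hna hext hζ hζ1

lemma finite_pow_eq {c : K} {n : ℕ} (hn : 0 < n) : {x : K | x ^ n = c}.Finite := by
  classical
  refine Set.Finite.subset (Polynomial.nthRoots n c).toFinset.finite_toSet fun x hx => ?_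
  simp only [Finset.coe_sort_coe, Multiset.mem_toFinset, Finset.mem_coe]
  rw [Polynomial.mem_nthRoots hn]
  exact hx

lemma bad_finite (hmul : ∀ x y, v (x * y) = v x * v y)
    (hna : ∀ x y, v (x + y) ≤ max (v x) (v y))
    (hext : ∀ x : ℚ_[p], v (algebraMap ℚ_[p] K x) = ‖x‖)
    {A β : K} (hA : v A = 1) {n : ℕ} (hn : 0 < n) :
    {ε : K | IsPrimeToRootOfUnity p ε ∧ v (A * ε ^ n - β) < 1}.Finite := by
  by_cases hne : {ε : K | IsPrimeToRootOfUnity p ε ∧ v (A * ε ^ n - β) < 1}.Nonempty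
  · obtain ⟨ε₀, hε₀, hv₀⟩ := hne
    refine Set.Finite.subset (finite_pow_eq (c := ε₀ ^ n) hn) fun ε ⟨hε, hvε⟩ => ?_
    by_contra hneq
    have h1 : v (A * ε ^ n - A * ε₀ ^ n) = 1 := by
      rw [← mul_sub, hmul, hA, one_mul]
      exact v_rou_sub hmul hna hext (hε.pow n) (hε₀.pow n) hneq
    have h2 : A * ε ^ n - A * ε₀ ^ n = (A * ε ^ n - β) - (A * ε₀ ^ n - β) := by ring
    have h3 := v_sub_le hmul hna hext (A * ε ^ n - β) (A * ε₀ ^ n - β)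
    rw [← h2, h1] at h3
    rcases max_cases (v (A * ε ^ n - β)) (v (A * ε₀ ^ n - β)) with ⟨h, _⟩ | ⟨h, _⟩ <;>
      rw [h] at h3 <;> linarith
  · rw [Set.not_nonempty_iff_eq_empty] at hne
    rw [hne]; exact Set.finite_empty

lemma quad_roots (hmul : ∀ x y, v (x * y) = v x * v y)
    (hna : ∀ x y, v (x + y) ≤ max (v x) (v y))
    (hext : ∀ x : ℚ_[p], v (algebraMap ℚ_[p] K x) = ‖x‖)
    {c : K} (hc : v c ≤ 1) :
    ∃ β γ : K, v β = 1 ∧ v γ = 1 ∧ β + γ = c ∧ β * γ = 1 := by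
  obtain ⟨β, hβ⟩ := IsAlgClosed.exists_root
    (Polynomial.X ^ 2 - Polynomial.C c * Polynomial.X + 1 : Polynomial K)
    (by
      have : (Polynomial.X ^ 2 - Polynomial.C c * Polynomial.X + 1 :
          Polynomial K).degree = 2 := by compute_degree!
      rw [this]; norm_num)
  have hβeq : β ^ 2 - c * β + 1 = 0 := by
    have := hβ
    simp [Polynomial.IsRoot, Polynomial.eval_add, Polynomial.eval_sub] at this
    linear_combination this
  set γ := c - β with hγ
  have hprodβγ : β * γ = 1 := by rw [hγ]; linear_combination -hβeq
  have hbg : v β * v γ = 1 := by rw [← hmul, hprodβγ, v_one hext]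
  have hbn : 0 ≤ v β := v_nonneg hmul β
  have hgn : 0 ≤ v γ := v_nonneg hmul γ
  have hgle : v γ ≤ max (v c) (v β) := by rw [hγ]; exact v_sub_le hmul hna hext c β
  have hble : v β ≤ max (v c) (v γ) := by
    have hb : β = c - γ := by rw [hγ]; ring
    rw [hb]; exact v_sub_le hmul hna hext c γ
  have hβ1 : v β = 1 := by
    rcases le_total (v β) 1 with h | h
    · have hg1 : 1 ≤ v γ := by nlinarith
      have hg2 : v γ ≤ 1 := hgle.trans (max_le hc h)
      nlinarith
    · have hg2 : v γ ≤ 1 := by nlinarith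
      have := hble.trans (max_le hc hg2)
      linarith
  have hγ1 : v γ = 1 := by rw [hβ1, one_mul] at hbg; exact hbg
  exact ⟨β, γ, hβ1, hγ1, by rw [hγ]; ring, hprodβγ⟩

end Aux2
section Aux3

variable {p : ℕ} [Fact p.Prime]

local notation "K" => AlgebraicClosure ℚ_[p]

lemma not_dvd_aux (k : ℕ) : ¬ p ∣ k * p + 1 := by
  intro hd
  have h1 : p ∣ 1 := by
    simpa using Nat.dvd_sub hd (dvd_mul_left p k)
  have := Nat.le_of_dvd one_pos h1
  have := (Fact.out : p.Prime).one_lt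
  omega

lemma infinite_ptrou : {ε : K | IsPrimeToRootOfUnity p ε}.Infinite := by
  have hp := (Fact.out : p.Prime)
  have key : ∀ k : ℕ, ∃ ε : K, IsPrimitiveRoot ε (k * p + 1) := by
    intro k
    have h0 : 0 < k * p + 1 := Nat.succ_pos _
    have hdeg : (Polynomial.cyclotomic (k * p + 1) K).degree ≠ 0 := by
      rw [Polynomial.degree_cyclotomic]
      exact_mod_cast (Nat.totient_pos.mpr h0).ne'
    obtain ⟨ε, hε⟩ := IsAlgClosed.exists_root _ hdeg
    have : NeZero ((k * p + 1 : ℕ) : K) := ⟨by exact_mod_cast h0.ne'⟩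
    exact ⟨ε, (Polynomial.isRoot_cyclotomic_iff).mp hε⟩
  choose f hf using key
  have hinj : Function.Injective f := by
    intro k₁ k₂ h
    have h₁ := (hf k₁).eq_orderOf
    have h₂ := (hf k₂).eq_orderOf
    rw [h] at h₁
    have : k₁ * p + 1 = k₂ * p + 1 := by rw [h₁, h₂]
    have hp1 := hp.pos
    have := Nat.eq_of_mul_eq_mul_right hp1 (by omega : k₁ * p = k₂ * p)
    omega
  refine Set.infinite_of_injective_forall_mem hinj fun k => ?_
  exact ⟨k * p + 1, Nat.succ_pos _, not_dvd_aux k, (hf k).pow_eq_one⟩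

end Aux3
theorem padic_norm_of_Gprod_at_roots_of_unity
    (p : ℕ) [Fact p.Prime] (d : ℕ) (hd : 0 < d)
    (v : AlgebraicClosure ℚ_[p] → ℝ)
    (hmul : ∀ x y, v (x * y) = v x * v y)
    (hna : ∀ x y, v (x + y) ≤ max (v x) (v y))
    (hext : ∀ x : ℚ_[p], v (algebraMap ℚ_[p] (AlgebraicClosure ℚ_[p]) x) = ‖x‖)
    {ι : Type*} (S : Finset ι) (n : ι → ℕ) (hn : ∀ x ∈ S, 0 < n x)
    (a α : ι → AlgebraicClosure ℚ_[p])
    (ha : ∀ x ∈ S, v (((p : AlgebraicClosure ℚ_[p]) ^ d) ^ n x * a x) ≤ 1)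
    (hα : ∀ x ∈ S, IsRootOfUnity (α x)) :
    (∀ ε : AlgebraicClosure ℚ_[p], IsRootOfUnity ε → v (Gprod p d S n a α ε) ≤ 1) ∧
    {ε : AlgebraicClosure ℚ_[p] | IsPrimeToRootOfUnity p ε ∧
        v (Gprod p d S n a α ε) ≠ 1}.Finite ∧
    -- equivalently: the minimum of `v_q(G(ε))` over all roots of unity `ε` equals `0`
    IsLeast {r : ℝ | ∃ ε : AlgebraicClosure ℚ_[p], IsRootOfUnity ε ∧
        Gprod p d S n a α ε ≠ 0 ∧ r = vq p d v (Gprod p d S n a α ε)} 0 := by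
  classical
  have hvα : ∀ x ∈ S, v (α x) = 1 := fun x hx => v_rou hmul hext (hα x hx)
  -- each factor has absolute value at most 1 at any root of unity
  have hfacle : ∀ x ∈ S, ∀ ε : AlgebraicClosure ℚ_[p], IsRootOfUnity ε →
      v (-1 + a x * α x * ((p : AlgebraicClosure ℚ_[p]) ^ d) ^ n x * ε ^ n x
        - α x ^ 2 * ε ^ (2 * n x)) ≤ 1 := by
    intro x hx ε hε
    have hvε : v ε = 1 := v_rou hmul hext hε
    have hA : v (a x * α x * ((p : AlgebraicClosure ℚ_[p]) ^ d) ^ n x * ε ^ n x) ≤ 1 := by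
      have h1 : a x * α x * ((p : AlgebraicClosure ℚ_[p]) ^ d) ^ n x * ε ^ n x
          = (((p : AlgebraicClosure ℚ_[p]) ^ d) ^ n x * a x) * (α x * ε ^ n x) := by ring
      rw [h1, hmul, hmul (α x) (ε ^ n x), v_pow hmul hext, hvα x hx, hvε, one_pow, one_mul, mul_one]
      exact ha x hx
    have hB : v (α x ^ 2 * ε ^ (2 * n x)) = 1 := by
      rw [hmul, v_pow hmul hext, v_pow hmul hext, hvα x hx, hvε, one_pow, one_pow, one_mul]
    have hm1 : v (-1 + a x * α x * ((p : AlgebraicClosure ℚ_[p]) ^ d) ^ n x * ε ^ n x) ≤ 1 := by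
      refine (hna _ _).trans (max_le ?_ hA)
      rw [show (-1 : AlgebraicClosure ℚ_[p]) = -(1 : AlgebraicClosure ℚ_[p]) from rfl,
        v_neg hmul hext, v_one hext]
    exact (v_sub_le hmul hna hext _ _).trans (max_le hm1 hB.le)
  have part1 : ∀ ε : AlgebraicClosure ℚ_[p], IsRootOfUnity ε →
      v (Gprod p d S n a α ε) ≤ 1 := by
    intro ε hε
    rw [Gprod, v_prod hmul hext]
    exact Finset.prod_le_one (fun x _ => v_nonneg hmul _) (fun x hx => hfacle x hx ε hε)
  -- finiteness of the per-factor bad sets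
  have hfactfin : ∀ x ∈ S, {ε : AlgebraicClosure ℚ_[p] | IsPrimeToRootOfUnity p ε ∧
      v (-1 + a x * α x * ((p : AlgebraicClosure ℚ_[p]) ^ d) ^ n x * ε ^ n x
        - α x ^ 2 * ε ^ (2 * n x)) ≠ 1}.Finite := by
    intro x hx
    have hc : v (a x * ((p : AlgebraicClosure ℚ_[p]) ^ d) ^ n x) ≤ 1 := by
      rw [mul_comm]; exact ha x hx
    obtain ⟨β, γ, hβ1, hγ1, hsum, hprod⟩ := quad_roots hmul hna hext hc
    have finβ := bad_finite (β := β) hmul hna hext (hvα x hx) (hn x hx)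
    have finγ := bad_finite (β := γ) hmul hna hext (hvα x hx) (hn x hx)
    refine (finβ.union finγ).subset ?_
    rintro ε ⟨hε, hvne⟩
    have hFfac : -1 + a x * α x * ((p : AlgebraicClosure ℚ_[p]) ^ d) ^ n x * ε ^ n x
        - α x ^ 2 * ε ^ (2 * n x)
        = -((α x * ε ^ n x - β) * (α x * ε ^ n x - γ)) := by
      linear_combination (-(α x * ε ^ n x)) * hsum + hprod
    have hvu : v (α x * ε ^ n x) = 1 := by
      rw [hmul, v_pow hmul hext, hvα x hx, v_rou hmul hext hε.isRootOfUnity, one_pow, mul_one]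
    have h1 : v (α x * ε ^ n x - β) ≤ 1 := by
      have h := v_sub_le hmul hna hext (α x * ε ^ n x) β
      rwa [hvu, hβ1, max_self] at h
    have h2 : v (α x * ε ^ n x - γ) ≤ 1 := by
      have h := v_sub_le hmul hna hext (α x * ε ^ n x) γ
      rwa [hvu, hγ1, max_self] at h
    rw [hFfac, v_neg hmul hext, hmul] at hvne
    by_cases hb : v (α x * ε ^ n x - β) < 1
    · exact Set.mem_union_left _ ⟨hε, hb⟩
    · by_cases hg : v (α x * ε ^ n x - γ) < 1
      · exact Set.mem_union_right _ ⟨hε, hg⟩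
      · exfalso
        push_neg at hb hg
        rw [le_antisymm h1 hb, le_antisymm h2 hg, one_mul] at hvne
        exact hvne rfl
  have part2 : {ε : AlgebraicClosure ℚ_[p] | IsPrimeToRootOfUnity p ε ∧
      v (Gprod p d S n a α ε) ≠ 1}.Finite := by
    refine (Set.Finite.biUnion S.finite_toSet hfactfin).subset ?_
    rintro ε ⟨hε, hvne⟩
    by_contra hnot
    simp only [Set.mem_iUnion, Set.mem_setOf_eq, not_exists, not_and] at hnot
    apply hvne
    rw [Gprod, v_prod hmul hext]
    refine Finset.prod_eq_one fun x hx => ?_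
    by_contra hne1
    exact hnot x hx hε hne1
  refine ⟨part1, part2, ?_, ?_⟩
  · -- 0 is attained
    obtain ⟨ε, hεP, hεnB⟩ := ((infinite_ptrou (p := p)).diff part2).nonempty
    have hv1 : v (Gprod p d S n a α ε) = 1 := by
      by_contra h
      exact hεnB ⟨hεP, h⟩
    have hne0 : Gprod p d S n a α ε ≠ 0 := by
      intro h0
      rw [h0, v_zero hext] at hv1
      norm_num at hv1
    exact ⟨ε, hεP.isRootOfUnity, hne0, by rw [vq, hv1, Real.log_one, neg_zero, zero_div]⟩
  · -- 0 is a lower bound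
    rintro r ⟨ε, hε, hne0, rfl⟩
    rw [vq]
    apply div_nonneg
    · rw [neg_nonneg]
      exact Real.log_nonpos (v_nonneg hmul _) (part1 ε hε)
    · apply Real.log_nonneg
      have h1 : (1 : ℝ) ≤ (p : ℝ) := by exact_mod_cast (Fact.out : p.Prime).one_le
      exact one_le_pow₀ h1
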